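/- Let k be an algebraically closed field of characteristic zero. There exists a Lie algebra morphism from ym(3) to sl(2, k) whose image is solvable but not nilpotent; explicitly, the assignment x₁ ↦ h, x₂ ↦ e, x₃ ↦ i·h (where i² = −1, e = E₁₂ and h = E₁₁ − E₂₂) kills the Yang–Mills relations r₁, r₂, r₃ and its image, the span of e and h, is a solvable Lie subalgebra of sl(2, k) that is not nilpotent. -/

import Mathlib

open FreeLieAlgebra LieAlgebra LieAlgebra.SpecialLinear

/-- The Yang–Mills relation `r j = ∑ i [xᵢ,[xᵢ,xⱼ]]` in the free Lie algebra on three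
generators over `k`. -/
noncomputable def ymRel3 (k : Type*) [Field k] (j : Fin 3) : FreeLieAlgebra k (Fin 3) :=
  ∑ i : Fin 3, ⁅of k i, ⁅of k i, of k j⁆⁆

/-- The standard nilpotent element `e = E₁₂` of `sl(2,k)`. -/
noncomputable def Esl (k : Type*) [Field k] : sl (Fin 2) k := single (0 : Fin 2) 1 (by decide) (1 : k)

/-- The standard semisimple element `h = E₁₁ − E₂₂` of `sl(2,k)`. -/
noncomputable def Hsl (k : Type*) [Field k] : sl (Fin 2) k :=
  ⟨Matrix.single 0 0 1 - Matrix.single 1 1 1, by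
    show _ ∈ LinearMap.ker (Matrix.traceLinearMap (Fin 2) k k)
    simp [Matrix.trace_single_eq_same]⟩

lemma bHE (k : Type*) [Field k] : ⁅Hsl k, Esl k⁆ = (2:k) • Esl k := by
  apply Subtype.ext
  show ⁅(Hsl k).val, (Esl k).val⁆ = (2:k) • (Esl k).val
  rw [Ring.lie_def]
  show _ = (2:k) • (Matrix.single 0 1 1)
  ext a b
  fin_cases a <;> fin_cases b <;>
    simp [Hsl, Esl, val_single, Matrix.mul_apply, Matrix.single, Fin.sum_univ_two] <;>
    norm_num

lemma bEH (k : Type*) [Field k] : ⁅Esl k, Hsl k⁆ = (-2:k) • Esl k := by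
  rw [← lie_skew, bHE]; module

lemma Esl_ne_zero (k : Type*) [Field k] : Esl k ≠ 0 := by
  intro h
  have := congrArg (fun x => x.val 0 1) h
  simp [Esl, val_single, Matrix.single] at this

lemma brspan (k : Type*) [Field k] {x y : sl (Fin 2) k}
    (hx : x ∈ Submodule.span k {Esl k, Hsl k}) (hy : y ∈ Submodule.span k {Esl k, Hsl k}) :
    ∃ c : k, ⁅x, y⁆ = c • Esl k := by
  obtain ⟨a, b, hx⟩ := Submodule.mem_span_pair.mp hx
  obtain ⟨c, d, hy⟩ := Submodule.mem_span_pair.mp hy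
  refine ⟨b * c * 2 - a * d * 2, ?_⟩
  rw [← hx, ← hy]
  simp only [add_lie, lie_add, smul_lie, lie_smul, lie_self, bHE, bEH, smul_zero, zero_add,
    add_zero, smul_smul]
  match_scalars
  ring

/-- The Borel (span of `e` and `h`) as a Lie subalgebra of `sl(2,k)`. -/
noncomputable def Bsl (k : Type*) [Field k] : LieSubalgebra k (sl (Fin 2) k) :=
  { Submodule.span k {Esl k, Hsl k} with
    lie_mem' := fun {x y} hx hy => by
      obtain ⟨c, hc⟩ := brspan k hx hy
      rw [hc]
      exact Submodule.smul_mem _ _ (Submodule.subset_span (by simp)) }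

/-- There is a Lie algebra morphism `ym(3) → sl(2,k)` whose image is solvable but not
nilpotent: the assignment `x₁ ↦ h`, `x₂ ↦ e`, `x₃ ↦ i·h` (where `i² = −1`) kills the
Yang–Mills relations, and its image, the span of `e` and `h`, is a solvable Lie subalgebra
of `sl(2,k)` which is not nilpotent. -/
theorem ym3_to_sl2_solvable_not_nilpotent (k : Type*) [Field k] [IsAlgClosed k] [CharZero k]
    (i : k) (hi : i ^ 2 = -1) :
    ∃ φ : FreeLieAlgebra k (Fin 3) →ₗ⁅k⁆ sl (Fin 2) k,
      φ (of k 0) = Hsl k ∧ φ (of k 1) = Esl k ∧ φ (of k 2) = i • Hsl k ∧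
      (∀ j : Fin 3, φ (ymRel3 k j) = 0) ∧
      φ.range.toSubmodule = Submodule.span k {Esl k, Hsl k} ∧
      LieAlgebra.IsSolvable φ.range ∧
      ¬ LieRing.IsNilpotent φ.range := by
  have hi' : i * i = -1 := by rw [← sq]; exact hi
  set f : Fin 3 → sl (Fin 2) k := ![Hsl k, Esl k, i • Hsl k] with hf
  set φ := FreeLieAlgebra.lift k f with hφ
  have h0 : φ (of k 0) = Hsl k := by rw [hφ, lift_of_apply]; rfl
  have h1 : φ (of k 1) = Esl k := by rw [hφ, lift_of_apply]; rfl
  have h2 : φ (of k 2) = i • Hsl k := by rw [hφ, lift_of_apply]; rfl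
  -- the Yang–Mills relations are killed
  have hrel : ∀ j : Fin 3, φ (ymRel3 k j) = 0 := by
    intro j
    have expand : φ (ymRel3 k j) = ∑ l : Fin 3, ⁅f l, ⁅f l, f j⁆⁆ := by
      show φ.toLinearMap (ymRel3 k j) = _
      rw [ymRel3, map_sum]
      refine Finset.sum_congr rfl fun l _ => ?_
      show φ ⁅of k l, ⁅of k l, of k j⁆⁆ = _
      rw [LieHom.map_lie, LieHom.map_lie, hφ, lift_of_apply, lift_of_apply]
    rw [expand, Fin.sum_univ_three]
    have e0 : f 0 = Hsl k := rfl
    have e1 : f 1 = Esl k := rfl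
    have e2 : f 2 = i • Hsl k := rfl
    fin_cases j
    · show ⁅f 0, ⁅f 0, f 0⁆⁆ + ⁅f 1, ⁅f 1, f 0⁆⁆ + ⁅f 2, ⁅f 2, f 0⁆⁆ = 0
      rw [e0, e1, e2]
      simp [bHE, bEH, lie_smul, smul_lie]
    · show ⁅f 0, ⁅f 0, f 1⁆⁆ + ⁅f 1, ⁅f 1, f 1⁆⁆ + ⁅f 2, ⁅f 2, f 1⁆⁆ = 0
      rw [e0, e1, e2]
      simp only [bHE, bEH, lie_smul, smul_lie, lie_self, lie_zero, smul_zero, add_zero,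
        smul_smul]
      match_scalars
      linear_combination (4:k) * hi'
    · show ⁅f 0, ⁅f 0, f 2⁆⁆ + ⁅f 1, ⁅f 1, f 2⁆⁆ + ⁅f 2, ⁅f 2, f 2⁆⁆ = 0
      rw [e0, e1, e2]
      simp [bHE, bEH, lie_smul, smul_lie]
  -- the range is the span of e and h
  have hEmem : Esl k ∈ Bsl k := Submodule.subset_span (by simp)
  have hHmem : Hsl k ∈ Bsl k := Submodule.subset_span (by simp)
  set g : Fin 3 → Bsl k := ![⟨Hsl k, hHmem⟩, ⟨Esl k, hEmem⟩, i • ⟨Hsl k, hHmem⟩] with hg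
  have hcomp : φ = (Bsl k).incl.comp (FreeLieAlgebra.lift k g) := by
    apply FreeLieAlgebra.hom_ext
    intro x
    rw [hφ, lift_of_apply, LieHom.comp_apply, lift_of_apply]
    fin_cases x <;> rfl
  have hrange : φ.range.toSubmodule = Submodule.span k {Esl k, Hsl k} := by
    apply le_antisymm
    · rintro x ⟨y, rfl⟩
      rw [hcomp]
      exact ((FreeLieAlgebra.lift k g) y).2
    · rw [Submodule.span_le]
      rintro x hx
      simp only [Set.mem_insert_iff, Set.mem_singleton_iff] at hx
      rcases hx with rfl | rfl
      · exact ⟨of k 1, h1⟩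
      · exact ⟨of k 0, h0⟩
  -- setup inside the range
  set L := φ.range with hL
  have hEmem' : Esl k ∈ L := ⟨of k 1, h1⟩
  have hHmem' : Hsl k ∈ L := ⟨of k 0, h0⟩
  set E' : L := ⟨Esl k, hEmem'⟩ with hE'
  set H' : L := ⟨Hsl k, hHmem'⟩ with hH'
  have hmemspan : ∀ x : L, (x : sl (Fin 2) k) ∈ Submodule.span k {Esl k, Hsl k} := by
    intro x
    rw [← hrange]
    exact x.2
  have key : ∀ x y : L, ∃ c : k, ⁅x, y⁆ = c • E' := by
    intro x y
    obtain ⟨c, hc⟩ := brspan k (hmemspan x) (hmemspan y)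
    exact ⟨c, Subtype.ext (by rw [LieSubalgebra.coe_bracket, hc]; rfl)⟩
  set I : LieIdeal k L := { Submodule.span k {E'} with
    lie_mem := fun {x m} hm => by
      obtain ⟨c, hc⟩ := Submodule.mem_span_singleton.mp hm
      obtain ⟨d, hd⟩ := key x m
      rw [hd]
      exact Submodule.smul_mem _ _ (Submodule.subset_span rfl) } with hI
  have hImem : ∀ x ∈ I, ∃ c : k, x = c • E' := by
    intro x hx
    obtain ⟨c, hc⟩ := Submodule.mem_span_singleton.mp hx
    exact ⟨c, hc.symm⟩
  refine ⟨φ, h0, h1, h2, hrel, hrange, ?_, ?_⟩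
  -- solvable
  · refine (LieAlgebra.isSolvable_iff k L).mpr ⟨2, ?_⟩
    have hD1 : derivedSeries k L 1 ≤ I := by
      rw [show derivedSeries k L 1 = ⁅(⊤ : LieIdeal k L), (⊤ : LieIdeal k L)⁆ from rfl]
      rw [LieSubmodule.lieIdeal_oper_eq_span, LieSubmodule.lieSpan_le]
      rintro z ⟨x, y, rfl⟩
      obtain ⟨c, hc⟩ := key x y
      rw [hc]
      exact Submodule.smul_mem _ _ (Submodule.subset_span rfl)
    have hD2 : derivedSeries k L 2 ≤ ⁅I, I⁆ := by
      rw [show derivedSeries k L 2 = ⁅derivedSeries k L 1, derivedSeries k L 1⁆ from rfl]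
      exact LieSubmodule.mono_lie hD1 hD1
    have hbot : (⁅I, I⁆ : LieIdeal k L) = ⊥ := by
      rw [LieSubmodule.lie_eq_bot_iff]
      intro x hx y hy
      obtain ⟨c, hc⟩ := hImem x hx
      obtain ⟨d, hd⟩ := hImem y hy
      rw [hc, hd]
      simp
    rw [← le_bot_iff]
    exact le_trans hD2 (le_of_eq hbot)
  -- not nilpotent
  · intro hnil
    obtain ⟨n, hn⟩ := (LieModule.isNilpotent_iff k L L).mp hnil
    have hElcs : ∀ m, E' ∈ LieModule.lowerCentralSeries k (↥L) (↥L) m := by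
      intro m
      induction m with
      | zero => trivial
      | succ m ih =>
        rw [LieModule.lowerCentralSeries_succ]
        have hb : ⁅H', E'⁆ ∈ ⁅(⊤ : LieIdeal k L), LieModule.lowerCentralSeries k (↥L) (↥L) m⁆ :=
          LieSubmodule.lie_mem_lie trivial ih
        have hHE' : ⁅H', E'⁆ = (2:k) • E' := Subtype.ext (by
          rw [LieSubalgebra.coe_bracket]; exact bHE k)
        have hEeq : E' = (2⁻¹:k) • ⁅H', E'⁆ := by
          rw [hHE', smul_smul]
          norm_num
        rw [hEeq]
        exact Submodule.smul_mem _ _ hb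
    have hmem := hElcs n
    rw [hn] at hmem
    have hE0 : E' = 0 := by simpa using hmem
    exact Esl_ne_zero k (by simpa [hE'] using congrArg Subtype.val hE0)
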